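/- The polynomials q_k^{α,β} defined by (∂/∂ξ - ∂/∂η)^k (ξ^{α+k} η^{β+k}) = ξ^α η^β q_k^{α,β}(ξ,η) satisfy the recurrence q_k^{α,β} = ξη(∂/∂ξ - ∂/∂η) q_{k-1}^{α+1,β+1} + (-(β+1)ξ + (α+1)η) q_{k-1}^{α+1,β+1} for all k ≥ 1. -/

import Mathlib

open MvPolynomial Complex

/-- The operator ∂/∂ξ - ∂/∂η acting on functions of two real variables. -/
noncomputable def Dop (f : ℝ → ℝ → ℂ) : ℝ → ℝ → ℂ :=
  fun x y => deriv (fun u => f u y) x - deriv (fun v => f x v) y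

lemma hasDerivAt_cpow_real {x : ℝ} (hx : 0 < x) (c : ℂ) :
    HasDerivAt (fun t : ℝ => (t : ℂ) ^ c) (c * (x : ℂ) ^ (c - 1)) x := by
  have h0 : (x : ℂ) ∈ Complex.slitPlane := Or.inl (by simpa using hx)
  exact (Complex.hasStrictDerivAt_cpow_const h0).hasDerivAt.comp_ofReal

lemma hasDerivAt_eval0 (P : MvPolynomial (Fin 2) ℂ) (w z : ℂ) :
    HasDerivAt (fun t : ℂ => eval ![t, w] P) (eval ![z, w] (pderiv 0 P)) z := by
  induction P using MvPolynomial.induction_on with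
  | C a => simpa using hasDerivAt_const z a
  | add p r hp hr => simpa [Pi.add_def] using hp.add hr
  | mul_X p n hp =>
    fin_cases n
    · have h := hp.mul (hasDerivAt_id z)
      simp only [eval_mul, eval_X, Matrix.cons_val_zero, pderiv_mul, pderiv_X_self, eval_add,
        map_add, mul_one] at h ⊢
      simpa [Pi.mul_def, mul_comm, mul_assoc] using h
    · have h := hp.mul_const w
      have h0 : pderiv (0 : Fin 2) (X (1 : Fin 2) : MvPolynomial (Fin 2) ℂ) = 0 := by
        simp [pderiv_X, Pi.single_apply]
      simp only [eval_mul, eval_X, Matrix.cons_val_one, Matrix.head_cons, pderiv_mul,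
        map_add, h0] at h ⊢
      simp
      simpa using h

lemma hasDerivAt_eval1 (P : MvPolynomial (Fin 2) ℂ) (w z : ℂ) :
    HasDerivAt (fun t : ℂ => eval ![w, t] P) (eval ![w, z] (pderiv 1 P)) z := by
  induction P using MvPolynomial.induction_on with
  | C a => simpa using hasDerivAt_const z a
  | add p r hp hr => simpa [Pi.add_def] using hp.add hr
  | mul_X p n hp =>
    fin_cases n
    · have h := hp.mul_const w
      have h0 : pderiv (1 : Fin 2) (X (0 : Fin 2) : MvPolynomial (Fin 2) ℂ) = 0 := by
        simp [pderiv_X, Pi.single_apply]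
      simp only [eval_mul, eval_X, Matrix.cons_val_zero, pderiv_mul, map_add, h0] at h ⊢
      simp
      simpa using h
    · have h := hp.mul (hasDerivAt_id z)
      simp only [eval_mul, eval_X, Matrix.cons_val_one, Matrix.head_cons, pderiv_mul,
        pderiv_X_self, map_add, mul_one] at h ⊢
      simpa [Pi.mul_def, mul_comm, mul_assoc] using h

lemma poly_zero_of_pos (P : Polynomial ℂ) (h : ∀ x : ℝ, 0 < x → P.eval (x : ℂ) = 0) :
    P = 0 := by
  refine Polynomial.eq_zero_of_infinite_isRoot P ?_
  have h2 : ((fun x : ℝ => (x:ℂ)) '' Set.Ioi 0).Infinite :=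
    (Set.Ioi_infinite 0).image (Set.injOn_of_injective Complex.ofReal_injective)
  refine h2.mono ?_
  rintro z ⟨x, hx, rfl⟩
  exact h x hx

lemma aeval_eval (P : MvPolynomial (Fin 2) ℂ) (z w : ℂ) :
    Polynomial.eval z (MvPolynomial.aeval ![Polynomial.X, Polynomial.C w] P)
      = eval ![z, w] P := by
  induction P using MvPolynomial.induction_on with
  | C a => simp
  | add p r hp hr => simp [hp, hr]
  | mul_X p n hp => fin_cases n <;> simp [hp]

lemma aeval_eval' (P : MvPolynomial (Fin 2) ℂ) (z w : ℂ) :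
    Polynomial.eval w (MvPolynomial.aeval ![Polynomial.C z, Polynomial.X] P)
      = eval ![z, w] P := by
  induction P using MvPolynomial.induction_on with
  | C a => simp
  | add p r hp hr => simp [hp, hr]
  | mul_X p n hp => fin_cases n <;> simp [hp]

lemma mv_eq_zero (P : MvPolynomial (Fin 2) ℂ)
    (h : ∀ x y : ℝ, 0 < x → 0 < y → eval ![(x:ℂ), (y:ℂ)] P = 0) : P = 0 := by
  have h1 : ∀ (z : ℂ) (y : ℝ), 0 < y → eval ![z, (y:ℂ)] P = 0 := by
    intro z y hy
    have := poly_zero_of_pos (MvPolynomial.aeval ![Polynomial.X, Polynomial.C (y:ℂ)] P)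
      (fun x hx => by rw [aeval_eval]; exact h x y hx hy)
    rw [← aeval_eval, this, Polynomial.eval_zero]
  have h2 : ∀ z w : ℂ, eval ![z, w] P = 0 := by
    intro z w
    have := poly_zero_of_pos (MvPolynomial.aeval ![Polynomial.C z, Polynomial.X] P)
      (fun y hy => by rw [aeval_eval']; exact h1 z y hy)
    rw [← aeval_eval', this, Polynomial.eval_zero]
  exact MvPolynomial.funext (fun v => by
    have hv : v = ![v 0, v 1] := by funext i; fin_cases i <;> simp
    rw [hv, h2, map_zero])

theorem stmt1 (q : ℂ → ℂ → ℕ → MvPolynomial (Fin 2) ℂ)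
    (hq : ∀ (α β : ℂ) (k : ℕ) (x y : ℝ), 0 < x → 0 < y →
      (Dop^[k] (fun ξ η => (ξ : ℂ) ^ (α + k) * (η : ℂ) ^ (β + k))) x y
        = (x : ℂ) ^ α * (y : ℂ) ^ β * MvPolynomial.eval ![(x : ℂ), (y : ℂ)] (q α β k))
    (α β : ℂ) (k : ℕ) (hk : 1 ≤ k) :
    q α β k
      = X 0 * X 1 *
          (pderiv 0 (q (α + 1) (β + 1) (k - 1)) - pderiv 1 (q (α + 1) (β + 1) (k - 1)))
        + (C (-(β + 1)) * X 0 + C (α + 1) * X 1) * q (α + 1) (β + 1) (k - 1) := by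
  obtain ⟨m, rfl⟩ : ∃ m, k = m + 1 := ⟨k - 1, (Nat.succ_pred_eq_of_pos hk).symm⟩
  simp only [Nat.add_sub_cancel]
  set Q := q (α + 1) (β + 1) m with hQdef
  refine eq_of_sub_eq_zero (mv_eq_zero _ (fun x y hx hy => ?_))
  rw [map_sub, sub_eq_zero]
  -- the function f and its rewriting
  have hexpα : α + ((m + 1 : ℕ) : ℂ) = (α + 1) + (m : ℕ) := by push_cast; ring
  have hexpβ : β + ((m + 1 : ℕ) : ℂ) = (β + 1) + (m : ℕ) := by push_cast; ring
  have hfun : (fun ξ η : ℝ => (ξ : ℂ) ^ (α + ((m+1:ℕ):ℂ)) * (η : ℂ) ^ (β + ((m+1:ℕ):ℂ)))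
      = fun ξ η : ℝ => (ξ : ℂ) ^ ((α+1) + (m:ℕ)) * (η : ℂ) ^ ((β+1) + (m:ℕ)) := by
    simp only [hexpα, hexpβ]
  have hQ : ∀ u v : ℝ, 0 < u → 0 < v →
      (Dop^[m] (fun ξ η : ℝ => (ξ : ℂ) ^ (α + ((m+1:ℕ):ℂ)) * (η : ℂ) ^ (β + ((m+1:ℕ):ℂ)))) u v
        = (u : ℂ) ^ (α+1) * (v : ℂ) ^ (β+1) * eval ![(u:ℂ), (v:ℂ)] Q := by
    intro u v hu hv
    rw [hfun]
    exact hq (α+1) (β+1) m u v hu hv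
  -- derivative in the first variable
  have hx' : (x : ℂ) ≠ 0 := by exact_mod_cast hx.ne'
  have hy' : (y : ℂ) ≠ 0 := by exact_mod_cast hy.ne'
  set f := fun ξ η : ℝ => (ξ : ℂ) ^ (α + ((m+1:ℕ):ℂ)) * (η : ℂ) ^ (β + ((m+1:ℕ):ℂ)) with hfdef
  have hg1 : HasDerivAt (fun u : ℝ => (u : ℂ) ^ (α+1) * (y : ℂ) ^ (β+1) * eval ![(u:ℂ), (y:ℂ)] Q)
      (((α+1) * (x:ℂ) ^ α * (y:ℂ) ^ (β+1)) * eval ![(x:ℂ), (y:ℂ)] Q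
        + ((x:ℂ) ^ (α+1) * (y:ℂ) ^ (β+1)) * eval ![(x:ℂ), (y:ℂ)] (pderiv 0 Q)) x := by
    have h1 := (hasDerivAt_cpow_real hx (α+1)).mul_const ((y : ℂ) ^ (β+1))
    have h2 := (hasDerivAt_eval0 Q ((y:ℂ)) ((x:ℂ))).comp_ofReal
    have := h1.mul h2
    simpa [Pi.mul_def, add_sub_cancel_right, mul_comm, mul_assoc, mul_left_comm] using this
  have hg2 : HasDerivAt (fun v : ℝ => (x : ℂ) ^ (α+1) * (v : ℂ) ^ (β+1) * eval ![(x:ℂ), (v:ℂ)] Q)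
      (((β+1) * (y:ℂ) ^ β * (x:ℂ) ^ (α+1)) * eval ![(x:ℂ), (y:ℂ)] Q
        + ((x:ℂ) ^ (α+1) * (y:ℂ) ^ (β+1)) * eval ![(x:ℂ), (y:ℂ)] (pderiv 1 Q)) y := by
    have h1 := ((hasDerivAt_cpow_real hy (β+1)).const_mul ((x : ℂ) ^ (α+1)))
    have h2 := (hasDerivAt_eval1 Q ((x:ℂ)) ((y:ℂ))).comp_ofReal
    have := h1.mul h2
    simpa [Pi.mul_def, add_sub_cancel_right, mul_comm, mul_assoc, mul_left_comm] using this
  have hev1 : (fun u : ℝ => (Dop^[m] f) u y)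
      =ᶠ[nhds x] fun u : ℝ => (u : ℂ) ^ (α+1) * (y : ℂ) ^ (β+1) * eval ![(u:ℂ), (y:ℂ)] Q := by
    filter_upwards [Ioi_mem_nhds hx] with u hu
    exact hQ u y hu hy
  have hev2 : (fun v : ℝ => (Dop^[m] f) x v)
      =ᶠ[nhds y] fun v : ℝ => (x : ℂ) ^ (α+1) * (v : ℂ) ^ (β+1) * eval ![(x:ℂ), (v:ℂ)] Q := by
    filter_upwards [Ioi_mem_nhds hy] with v hv
    exact hQ x v hx hv
  have key : (Dop^[m+1] f) x y
      = (((α+1) * (x:ℂ) ^ α * (y:ℂ) ^ (β+1)) * eval ![(x:ℂ), (y:ℂ)] Q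
          + ((x:ℂ) ^ (α+1) * (y:ℂ) ^ (β+1)) * eval ![(x:ℂ), (y:ℂ)] (pderiv 0 Q))
        - (((β+1) * (y:ℂ) ^ β * (x:ℂ) ^ (α+1)) * eval ![(x:ℂ), (y:ℂ)] Q
          + ((x:ℂ) ^ (α+1) * (y:ℂ) ^ (β+1)) * eval ![(x:ℂ), (y:ℂ)] (pderiv 1 Q)) := by
    rw [Function.iterate_succ_apply']
    show deriv (fun u => (Dop^[m] f) u y) x - deriv (fun v => (Dop^[m] f) x v) y = _
    rw [hev1.deriv_eq, hev2.deriv_eq, hg1.deriv, hg2.deriv]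
  have hmain := hq α β (m+1) x y hx hy
  rw [key] at hmain
  -- now algebra
  have hxa : (x:ℂ) ^ (α+1) = (x:ℂ) ^ α * (x:ℂ) := by
    rw [Complex.cpow_add _ _ hx', Complex.cpow_one]
  have hyb : (y:ℂ) ^ (β+1) = (y:ℂ) ^ β * (y:ℂ) := by
    rw [Complex.cpow_add _ _ hy', Complex.cpow_one]
  have hxne : (x:ℂ) ^ α ≠ 0 := by simp [Complex.cpow_eq_zero_iff, hx']
  have hyne : (y:ℂ) ^ β ≠ 0 := by simp [Complex.cpow_eq_zero_iff, hy']
  rw [hxa, hyb] at hmain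
  apply mul_left_cancel₀ (mul_ne_zero hxne hyne)
  rw [← hmain]
  simp only [map_add, map_mul, map_sub, eval_X, eval_C, Matrix.cons_val_zero,
    Matrix.cons_val_one, Matrix.head_cons]
  ring
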